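/- Let d ≥ 1, let K ⊆ [0,1]^d be convex, and let f : ℝ^d → ℝ be continuous DR-submodular and nonnegative on X = [0,1]^d, monotone on X (x ≤ y coordinatewise implies f(x) ≤ f(y)) with f(0) = 0, and differentiable on X with continuous bounded gradient ∇f. Define g : K → ℝ^d by g(x) = ∫_0^1 e^{z−1} · ∇f(z x) dz. Then for all x, y ∈ K: ⟨g(x), y − x⟩ ≥ (1 − 1/e) · f(y) − f(x). -/

import Mathlib

open MeasureTheory Finset

noncomputable section

/-- The unit cube `[0,1]^d` in `ℝ^d` (with Euclidean structure). -/
def cube (d : ℕ) : Set (EuclideanSpace ℝ (Fin d)) :=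
  {x | ∀ i, x i ∈ Set.Icc (0 : ℝ) 1}

/-- `f` is continuous DR-submodular on the unit cube `[0,1]^d`: for coordinatewise
comparable points `x ≤ y` in the cube and any feasible move of size `z ≥ 0` along a
coordinate direction, the gain at `x` dominates the gain at `y`. -/
def DRSubmodularOn (d : ℕ) (f : EuclideanSpace ℝ (Fin d) → ℝ) : Prop :=
  ∀ x y : EuclideanSpace ℝ (Fin d), x ∈ cube d → y ∈ cube d → (∀ i, x i ≤ y i) →
    ∀ (j : Fin d) (z : ℝ), 0 ≤ z →
      x + z • EuclideanSpace.single j (1 : ℝ) ∈ cube d →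
      y + z • EuclideanSpace.single j (1 : ℝ) ∈ cube d →
      f (y + z • EuclideanSpace.single j (1 : ℝ)) - f y ≤
        f (x + z • EuclideanSpace.single j (1 : ℝ)) - f x

namespace BoostAux

variable {d : ℕ}

local notation "⟪" x ", " y "⟫" => @inner ℝ _ _ x y

lemma apply_add (a b : EuclideanSpace ℝ (Fin d)) (i : Fin d) : (a + b) i = a i + b i := rfl
lemma apply_sub (a b : EuclideanSpace ℝ (Fin d)) (i : Fin d) : (a - b) i = a i - b i := rfl
lemma apply_smul (c : ℝ) (a : EuclideanSpace ℝ (Fin d)) (i : Fin d) : (c • a) i = c * a i := rfl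

lemma add_single_apply (a : EuclideanSpace ℝ (Fin d)) (c : ℝ) (j i : Fin d) :
    (a + c • EuclideanSpace.single j (1 : ℝ)) i = a i + (if i = j then c else 0) := by
  rw [apply_add, apply_smul, EuclideanSpace.single_apply]
  split <;> ring

lemma mem_cube_add_single {a : EuclideanSpace ℝ (Fin d)} (ha : a ∈ cube d) {c : ℝ} {j : Fin d}
    (h0 : 0 ≤ a j + c) (h1 : a j + c ≤ 1) :
    a + c • EuclideanSpace.single j (1 : ℝ) ∈ cube d := by
  intro i
  rw [add_single_apply]
  rcases eq_or_ne i j with rfl | hij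
  · simpa using ⟨h0, h1⟩
  · simpa [hij] using ha i

/-- derivative of `f` along a line, within a parameter set. -/
lemma hasDerivWithinAt_line {f : EuclideanSpace ℝ (Fin d) → ℝ}
    {f' : EuclideanSpace ℝ (Fin d) → EuclideanSpace ℝ (Fin d)}
    {p v : EuclideanSpace ℝ (Fin d)} {s : Set ℝ} {t0 : ℝ}
    (hg : HasGradientWithinAt f (f' (p + t0 • v)) (cube d) (p + t0 • v))
    (hs : ∀ t ∈ s, p + t • v ∈ cube d) :
    HasDerivWithinAt (fun t : ℝ => f (p + t • v)) (⟪f' (p + t0 • v), v⟫) s t0 := by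
  have hγ : HasDerivWithinAt (fun t : ℝ => p + t • v) v s t0 := by
    simpa using (((hasDerivAt_id t0).smul_const v).const_add p).hasDerivWithinAt
  have h2 := hg.hasFDerivWithinAt.comp_hasDerivWithinAt t0 hγ hs
  simpa [InnerProductSpace.toDual_apply_apply, Function.comp_def] using h2

lemma nonneg_of_slope {h : ℝ → ℝ} {c : ℝ} {s : Set ℝ} (h0 : (0:ℝ) ∉ s)
    (hd : HasDerivWithinAt h c s 0) (hne : (nhdsWithin (0:ℝ) s).NeBot)
    (hs : ∀ t ∈ s, 0 ≤ (h t - h 0) / t) : 0 ≤ c := by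
  have h1 := hasDerivWithinAt_iff_tendsto_slope.mp hd
  rw [show s \ {(0:ℝ)} = s from Set.diff_singleton_eq_self h0] at h1
  refine ge_of_tendsto h1 ?_
  filter_upwards [self_mem_nhdsWithin] with t ht
  simpa [slope_def_field, sub_zero] using hs t ht

section coord

variable {f : EuclideanSpace ℝ (Fin d) → ℝ}
  {f' : EuclideanSpace ℝ (Fin d) → EuclideanSpace ℝ (Fin d)}
  (hgrad : ∀ x ∈ cube d, HasGradientWithinAt f (f' x) (cube d) x)

include hgrad in
/-- Nonnegativity of the partial derivatives of a monotone function on the cube. -/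
lemma grad_coord_nonneg
    (hmono : ∀ x ∈ cube d, ∀ y ∈ cube d, (∀ i, x i ≤ y i) → f x ≤ f y)
    {a : EuclideanSpace ℝ (Fin d)} (ha : a ∈ cube d) (j : Fin d) :
    0 ≤ ⟪f' a, EuclideanSpace.single j (1:ℝ)⟫ := by
  set v : EuclideanSpace ℝ (Fin d) := EuclideanSpace.single j (1:ℝ) with hv
  have haj0 := (ha j).1
  have haj1 := (ha j).2
  have key : ∀ s : Set ℝ, (0:ℝ) ∉ s → (nhdsWithin (0:ℝ) s).NeBot →
      (∀ t ∈ s, a + t • v ∈ cube d) →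
      (∀ t ∈ s, 0 ≤ (f (a + t • v) - f a) / t) →
      0 ≤ ⟪f' a, v⟫ := by
    intro s h0 hne hmem hslope
    have hg : HasGradientWithinAt f (f' (a + (0:ℝ) • v)) (cube d) (a + (0:ℝ) • v) := by
      rw [zero_smul, add_zero]; exact hgrad a ha
    have hd := hasDerivWithinAt_line (f' := f') hg hmem
    rw [show a + (0:ℝ) • v = a by rw [zero_smul, add_zero]] at hd
    refine nonneg_of_slope h0 hd hne ?_
    intro t ht
    simpa using hslope t ht
  rcases lt_or_eq_of_le haj1 with hlt | heq
  · refine key (Set.Ioc 0 (1 - a j)) (by simp) (left_nhdsWithin_Ioc_neBot (by linarith)) ?_ ?_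
    · intro t ht
      exact mem_cube_add_single ha (by nlinarith [ht.1.le]) (by linarith [ht.2])
    · intro t ht
      have hmem := mem_cube_add_single ha (c := t) (j := j) (by nlinarith [ht.1.le])
        (by linarith [ht.2])
      have hle : f a ≤ f (a + t • v) := by
        refine hmono a ha _ hmem ?_
        intro i; rw [add_single_apply]; split <;> simp [ht.1.le]
      exact div_nonneg (by linarith) ht.1.le
  · refine key (Set.Ico (-1 : ℝ) 0) (by simp) (right_nhdsWithin_Ico_neBot (by norm_num)) ?_ ?_
    · intro t ht
      exact mem_cube_add_single ha (by rw [heq]; linarith [ht.1]) (by rw [heq]; linarith [ht.2.le])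
    · intro t ht
      have hmem := mem_cube_add_single ha (c := t) (j := j)
        (by rw [heq]; linarith [ht.1]) (by rw [heq]; linarith [ht.2.le])
      have hle : f (a + t • v) ≤ f a := by
        refine hmono _ hmem a ha ?_
        intro i; rw [add_single_apply]; split <;> simp [ht.2.le]
      exact div_nonneg_of_nonpos (by linarith) ht.2.le

include hgrad in
/-- Antitonicity of the partial derivatives of a DR-submodular function on the cube. -/
lemma grad_coord_antitone (hsub : DRSubmodularOn d f)
    {a b : EuclideanSpace ℝ (Fin d)} (ha : a ∈ cube d) (hb : b ∈ cube d)
    (hab : ∀ i, a i ≤ b i) (j : Fin d) :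
    ⟪f' b, EuclideanSpace.single j (1:ℝ)⟫ ≤ ⟪f' a, EuclideanSpace.single j (1:ℝ)⟫ := by
  set v : EuclideanSpace ℝ (Fin d) := EuclideanSpace.single j (1:ℝ) with hv
  rw [← sub_nonneg]
  have haj0 := (ha j).1
  have haj1 := (ha j).2
  have hbj0 := (hb j).1
  have hbj1 := (hb j).2
  rcases lt_or_eq_of_le hbj1 with hlt | heqb
  · -- b j < 1 : right slopes for both
    set s : Set ℝ := Set.Ioc 0 (1 - b j) with hs
    have hmema : ∀ t ∈ s, a + t • v ∈ cube d := fun t ht =>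
      mem_cube_add_single ha (by nlinarith [ht.1.le]) (by linarith [ht.2, hab j])
    have hmemb : ∀ t ∈ s, b + t • v ∈ cube d := fun t ht =>
      mem_cube_add_single hb (by nlinarith [ht.1.le]) (by linarith [ht.2])
    have hga : HasGradientWithinAt f (f' (a + (0:ℝ) • v)) (cube d) (a + (0:ℝ) • v) := by
      rw [zero_smul, add_zero]; exact hgrad a ha
    have hgb : HasGradientWithinAt f (f' (b + (0:ℝ) • v)) (cube d) (b + (0:ℝ) • v) := by
      rw [zero_smul, add_zero]; exact hgrad b hb
    have hd := (hasDerivWithinAt_line (f' := f') hga hmema).sub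
      (hasDerivWithinAt_line (f' := f') hgb hmemb)
    rw [show a + (0:ℝ) • v = a by rw [zero_smul, add_zero],
        show b + (0:ℝ) • v = b by rw [zero_smul, add_zero]] at hd
    refine nonneg_of_slope (by simp [hs]) hd (left_nhdsWithin_Ioc_neBot (by linarith)) ?_
    intro t ht
    have h1 := hsub a b ha hb hab j t ht.1.le (hmema t ht) (hmemb t ht)
    rw [← hv] at h1
    simp only [Pi.sub_apply, zero_smul, add_zero]
    exact div_nonneg (by linarith) ht.1.le
  · rcases lt_or_eq_of_le haj1 with hlta | heqa
    · -- a j < 1 = b j : right slope at a, left slope at b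
      set s : Set ℝ := Set.Ioc 0 (1 - a j) with hs
      have hmema : ∀ t ∈ s, a + t • v ∈ cube d := fun t ht =>
        mem_cube_add_single ha (by nlinarith [ht.1.le]) (by linarith [ht.2])
      have hmemb : ∀ t ∈ s, b + t • (-v) ∈ cube d := by
        intro t ht
        rw [smul_neg, ← neg_smul]
        exact mem_cube_add_single hb (by rw [heqb]; linarith [ht.2, haj0]) (by linarith [ht.1.le])
      have hga : HasGradientWithinAt f (f' (a + (0:ℝ) • v)) (cube d) (a + (0:ℝ) • v) := by
        rw [zero_smul, add_zero]; exact hgrad a ha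
      have hgb : HasGradientWithinAt f (f' (b + (0:ℝ) • (-v))) (cube d) (b + (0:ℝ) • (-v)) := by
        rw [zero_smul, add_zero]; exact hgrad b hb
      have hd := (hasDerivWithinAt_line (f' := f') hga hmema).add
        (hasDerivWithinAt_line (f' := f') hgb hmemb)
      rw [show a + (0:ℝ) • v = a by rw [zero_smul, add_zero],
          show b + (0:ℝ) • (-v) = b by rw [zero_smul, add_zero],
          inner_neg_right, ← sub_eq_add_neg] at hd
      refine nonneg_of_slope (by simp [hs]) hd (left_nhdsWithin_Ioc_neBot (by linarith)) ?_
      intro t ht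
      have hyb : b + t • (-v) = b + (-t) • v := by rw [smul_neg, ← neg_smul]
      have hyc : (b + (-t) • v) + t • v = b := by
        rw [add_assoc, ← add_smul]
        simp
      have hmemb' : b + (-t) • v ∈ cube d := by rw [← hyb]; exact hmemb t ht
      have hible : ∀ i, a i ≤ (b + (-t) • v) i := by
        intro i
        rw [hv, add_single_apply]
        rcases eq_or_ne i j with rfl | hij
        · rw [if_pos rfl, heqb]; linarith [ht.2]
        · rw [if_neg hij, add_zero]; exact hab i
      have h1 := hsub a (b + (-t) • v) ha hmemb' hible j t ht.1.le (hmema t ht)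
        (by rw [← hv, hyc]; exact hb)
      rw [← hv, hyc] at h1
      simp only [Pi.add_apply, zero_smul, add_zero]
      have hbrw : f (b + t • (-v)) = f (b + (-t) • v) := by rw [hyb]
      rw [hbrw]
      exact div_nonneg (by linarith) ht.1.le
    · -- a j = 1 = b j : left slopes for both
      set s : Set ℝ := Set.Ico (-1 : ℝ) 0 with hs
      have hmema : ∀ t ∈ s, a + t • v ∈ cube d := fun t ht =>
        mem_cube_add_single ha (by rw [heqa]; linarith [ht.1]) (by rw [heqa]; linarith [ht.2.le])
      have hmemb : ∀ t ∈ s, b + t • v ∈ cube d := fun t ht =>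
        mem_cube_add_single hb (by rw [heqb]; linarith [ht.1]) (by rw [heqb]; linarith [ht.2.le])
      have hga : HasGradientWithinAt f (f' (a + (0:ℝ) • v)) (cube d) (a + (0:ℝ) • v) := by
        rw [zero_smul, add_zero]; exact hgrad a ha
      have hgb : HasGradientWithinAt f (f' (b + (0:ℝ) • v)) (cube d) (b + (0:ℝ) • v) := by
        rw [zero_smul, add_zero]; exact hgrad b hb
      have hd := (hasDerivWithinAt_line (f' := f') hga hmema).sub
        (hasDerivWithinAt_line (f' := f') hgb hmemb)
      rw [show a + (0:ℝ) • v = a by rw [zero_smul, add_zero],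
          show b + (0:ℝ) • v = b by rw [zero_smul, add_zero]] at hd
      refine nonneg_of_slope (by simp [hs]) hd (right_nhdsWithin_Ico_neBot (by norm_num)) ?_
      intro t ht
      have hible : ∀ i, (a + t • v) i ≤ (b + t • v) i := by
        intro i
        rw [hv, add_single_apply, add_single_apply]
        exact add_le_add_left (hab i) _
      have hca : (a + t • v) + (-t) • v = a := by rw [add_assoc, ← add_smul]; simp
      have hcb : (b + t • v) + (-t) • v = b := by rw [add_assoc, ← add_smul]; simp
      have h1 := hsub (a + t • v) (b + t • v) (hmema t ht) (hmemb t ht) hible j (-t)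
        (by linarith [ht.2.le]) (by rw [hca]; exact ha) (by rw [hcb]; exact hb)
      rw [← hv] at h1
      rw [hca, hcb] at h1
      simp only [Pi.sub_apply, zero_smul, add_zero]
      exact div_nonneg_of_nonpos (by linarith) ht.2.le

lemma coord_of_inner_single (u : EuclideanSpace ℝ (Fin d)) (j : Fin d) :
    ⟪u, EuclideanSpace.single j (1:ℝ)⟫ = u j := by
  rw [EuclideanSpace.inner_single_right]
  simp

lemma inner_coords (u w : EuclideanSpace ℝ (Fin d)) : ⟪u, w⟫ = ∑ i, u i * w i := by
  simp [PiLp.inner_apply, RCLike.inner_apply, mul_comm]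

lemma inner_nonneg_coords {u w : EuclideanSpace ℝ (Fin d)} (hu : ∀ j, 0 ≤ u j)
    (hw : ∀ i, 0 ≤ w i) : 0 ≤ ⟪u, w⟫ := by
  rw [inner_coords]
  exact Finset.sum_nonneg fun i _ => mul_nonneg (hu i) (hw i)

lemma inner_mono_coords {u1 u2 w : EuclideanSpace ℝ (Fin d)} (hw : ∀ i, 0 ≤ w i)
    (h : ∀ j, u2 j ≤ u1 j) : ⟪u2, w⟫ ≤ ⟪u1, w⟫ := by
  rw [inner_coords, inner_coords]
  exact Finset.sum_le_sum fun i _ => mul_le_mul_of_nonneg_right (h i) (hw i)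

include hgrad in
/-- Concavity along nonnegative directions. -/
lemma concave_dir (hsub : DRSubmodularOn d f)
    {u v : EuclideanSpace ℝ (Fin d)} (hu : u ∈ cube d) (hvc : v ∈ cube d)
    (huv : ∀ i, u i ≤ v i) : f v - f u ≤ ⟪f' u, v - u⟫ := by
  have hmem : ∀ t ∈ Set.Icc (0:ℝ) 1, u + t • (v - u) ∈ cube d := by
    intro t ht i
    have h1 := hu i; have h2 := hvc i; have h3 := huv i
    rw [apply_add, apply_smul, apply_sub]
    constructor
    · nlinarith [ht.1, ht.2, h1.1, h2.1]
    · nlinarith [ht.1, ht.2, h1.2, h2.2]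
  have hfc : ContinuousOn f (cube d) := fun p hp =>
    (hgrad p hp).hasFDerivWithinAt.continuousWithinAt
  have hφc : ContinuousOn (fun t : ℝ => f (u + t • (v - u))) (Set.Icc 0 1) := by
    refine hfc.comp ?_ hmem
    exact (continuous_const.add (continuous_id.smul continuous_const)).continuousOn
  have hderiv : ∀ t ∈ Set.Ioo (0:ℝ) 1,
      HasDerivAt (fun t : ℝ => f (u + t • (v - u))) (⟪f' (u + t • (v - u)), v - u⟫) t := by
    intro t ht
    have h0 := hasDerivWithinAt_line (f' := f') (hgrad _ (hmem t (Set.mem_Icc_of_Ioo ht))) hmem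
    exact h0.hasDerivAt (Icc_mem_nhds ht.1 ht.2)
  obtain ⟨c, hc, hceq⟩ := exists_hasDerivAt_eq_slope (fun t : ℝ => f (u + t • (v - u)))
    (fun t => ⟪f' (u + t • (v - u)), v - u⟫) one_pos hφc hderiv
  simp only [sub_zero, div_one] at hceq
  rw [show u + (1:ℝ) • (v - u) = v by rw [one_smul]; abel,
      show u + (0:ℝ) • (v - u) = u by rw [zero_smul, add_zero]] at hceq
  rw [← hceq]
  refine inner_mono_coords ?_ ?_
  · intro i; rw [apply_sub]; linarith [huv i]
  · intro i
    have hcmem : u + c • (v - u) ∈ cube d := hmem c (Set.mem_Icc_of_Ioo hc)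
    have hle : ∀ i, u i ≤ (u + c • (v - u)) i := by
      intro i
      rw [apply_add, apply_smul, apply_sub]
      nlinarith [hc.1.le, huv i]
    have h2 := grad_coord_antitone hgrad hsub hu hcmem hle i
    rwa [coord_of_inner_single, coord_of_inner_single] at h2

include hgrad in
/-- The key inequality: `f y - f u ≤ ⟪∇f(u), y⟫` for monotone DR-submodular `f`. -/
lemma key_inner (hsub : DRSubmodularOn d f)
    (hmono : ∀ x ∈ cube d, ∀ y ∈ cube d, (∀ i, x i ≤ y i) → f x ≤ f y)
    {u y : EuclideanSpace ℝ (Fin d)} (hu : u ∈ cube d) (hy : y ∈ cube d) :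
    f y - f u ≤ ⟪f' u, y⟫ := by
  classical
  set v : EuclideanSpace ℝ (Fin d) := WithLp.toLp 2 (fun i => max (u i) (y i)) with hvdef
  have hvapp : ∀ i, v i = max (u i) (y i) := fun i => rfl
  have hvc : v ∈ cube d := by
    intro i
    rw [hvapp i]
    exact ⟨le_max_of_le_left (hu i).1, max_le (hu i).2 (hy i).2⟩
  have huv : ∀ i, u i ≤ v i := fun i => (hvapp i) ▸ le_max_left _ _
  have h1 : f v - f u ≤ ⟪f' u, v - u⟫ := concave_dir hgrad hsub hu hvc huv
  have h2 : f y ≤ f v := hmono y hy v hvc (fun i => (hvapp i) ▸ le_max_right _ _)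
  have hsplit : ⟪f' u, y⟫ = ⟪f' u, v - u⟫ + ⟪f' u, y - v + u⟫ := by
    rw [← inner_add_right]
    congr 1
    abel
  have h3 : 0 ≤ ⟪f' u, y - v + u⟫ := by
    refine inner_nonneg_coords ?_ ?_
    · intro j
      have h4 := grad_coord_nonneg hgrad hmono hu j
      rwa [coord_of_inner_single] at h4
    · intro i
      have h5 : (y - v + u) i = y i - max (u i) (y i) + u i := by
        rw [apply_add, apply_sub, hvapp i]
      rw [h5]
      rcases le_total (u i) (y i) with h | h
      · rw [max_eq_right h]; linarith [(hu i).1]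
      · rw [max_eq_left h]; linarith [(hy i).1]
  linarith

end coord

end BoostAux


open BoostAux

/-- Corollary 7 of Zhang et al., monotone boosting: for monotone,
nonnegative, continuous DR-submodular `f` with `f 0 = 0`, the auxiliary gradient
`g x = ∫_0^1 e^{z-1} ∇f(z x) dz` satisfies `⟨g x, y - x⟩ ≥ (1 - 1/e) f y - f x`
for all `x, y ∈ K`. -/
theorem boosting_monotone
    (d : ℕ) (hd : 1 ≤ d)
    (K : Set (EuclideanSpace ℝ (Fin d))) (hKcvx : Convex ℝ K) (hKX : K ⊆ cube d)
    (f : EuclideanSpace ℝ (Fin d) → ℝ)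
    (f' : EuclideanSpace ℝ (Fin d) → EuclideanSpace ℝ (Fin d))
    (hsub : DRSubmodularOn d f)
    (hnonneg : ∀ x ∈ cube d, 0 ≤ f x)
    (hmono : ∀ x ∈ cube d, ∀ y ∈ cube d, (∀ i, x i ≤ y i) → f x ≤ f y)
    (hzero : f 0 = 0)
    (hgrad : ∀ x ∈ cube d, HasGradientWithinAt f (f' x) (cube d) x)
    (hcont : ContinuousOn f' (cube d))
    (hbdd : ∃ G : ℝ, ∀ x ∈ cube d, ‖f' x‖ ≤ G)
    (g : EuclideanSpace ℝ (Fin d) → EuclideanSpace ℝ (Fin d))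
    (hg : ∀ x ∈ K, g x = ∫ z in (0:ℝ)..1, Real.exp (z - 1) • f' (z • x)) :
    ∀ x ∈ K, ∀ y ∈ K,
      (1 - 1 / Real.exp 1) * f y - f x ≤ (inner ℝ (g x) (y - x) : ℝ) := by
  intro x hx y hy
  have hxX : x ∈ cube d := hKX hx
  have hyX : y ∈ cube d := hKX hy
  -- membership of z • x for z ∈ [0,1]
  have hzx : ∀ z ∈ Set.Icc (0:ℝ) 1, z • x ∈ cube d := by
    intro z hz i
    rw [apply_smul]
    exact ⟨mul_nonneg hz.1 (hxX i).1, by nlinarith [(hxX i).1, (hxX i).2, hz.1, hz.2]⟩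
  have hfc : ContinuousOn f (cube d) := fun p hp =>
    (hgrad p hp).hasFDerivWithinAt.continuousWithinAt
  have hlinec : Continuous fun z : ℝ => z • x := continuous_id.smul continuous_const
  have hf'c : ContinuousOn (fun z : ℝ => f' (z • x)) (Set.Icc 0 1) :=
    hcont.comp hlinec.continuousOn hzx
  have hexpc : Continuous fun z : ℝ => Real.exp (z - 1) :=
    Real.continuous_exp.comp (continuous_sub_right 1)
  -- integrability of the vector integrand
  have hInt : IntervalIntegrable (fun z : ℝ => Real.exp (z - 1) • f' (z • x)) volume 0 1 :=
    (hexpc.continuousOn.smul hf'c).intervalIntegrable_of_Icc zero_le_one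
  -- Step 1: push the inner product inside the integral
  have hgx : (inner ℝ (g x) (y - x) : ℝ)
      = ∫ z in (0:ℝ)..1, Real.exp (z - 1) * (inner ℝ (f' (z • x)) (y - x) : ℝ) := by
    have step := ContinuousLinearMap.intervalIntegral_comp_comm (innerSL ℝ (y - x)) hInt
    simp only [innerSL_apply_apply] at step
    rw [real_inner_comm, hg x hx, ← step]
    refine intervalIntegral.integral_congr fun z hz => ?_
    rw [real_inner_smul_right, real_inner_comm]
  -- F and its derivative G
  set F : ℝ → ℝ := fun z => f (z • x) with hF
  set G : ℝ → ℝ := fun z => (inner ℝ (f' (z • x)) x : ℝ) with hG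
  have hFw : ∀ z ∈ Set.Icc (0:ℝ) 1, HasDerivWithinAt F (G z) (Set.Icc 0 1) z := by
    intro z hz
    have hmem0 : ∀ t ∈ Set.Icc (0:ℝ) 1, (0 : EuclideanSpace ℝ (Fin d)) + t • x ∈ cube d := by
      intro t ht
      rw [zero_add]
      exact hzx t ht
    have hgp : HasGradientWithinAt f (f' ((0 : EuclideanSpace ℝ (Fin d)) + z • x)) (cube d)
        ((0 : EuclideanSpace ℝ (Fin d)) + z • x) := by
      rw [zero_add]
      exact hgrad _ (hzx z hz)
    have h0 := hasDerivWithinAt_line (f' := f') hgp hmem0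
    rw [zero_add] at h0
    simpa [hF, hG, zero_add] using h0
  have hFc : ContinuousOn F (Set.Icc 0 1) := hfc.comp hlinec.continuousOn hzx
  have hGc : ContinuousOn G (Set.Icc 0 1) := hf'c.inner continuousOn_const
  -- FTC : ∫ exp(z-1) (F z + G z) = f x
  have hΦd : ∀ z ∈ Set.Ioo (0:ℝ) 1, HasDerivAt (fun z => Real.exp (z - 1) * F z)
      (Real.exp (z - 1) * F z + Real.exp (z - 1) * G z) z := by
    intro z hz
    have hexp : HasDerivAt (fun z : ℝ => Real.exp (z - 1)) (Real.exp (z - 1)) z := by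
      simpa [Function.comp_def] using (Real.hasDerivAt_exp (z - 1)).comp z ((hasDerivAt_id z).sub_const 1)
    have hFd : HasDerivAt F (G z) z :=
      (hFw z (Set.mem_Icc_of_Ioo hz)).hasDerivAt (Icc_mem_nhds hz.1 hz.2)
    exact hexp.mul hFd
  have hIntFG : IntervalIntegrable (fun z => Real.exp (z - 1) * F z + Real.exp (z - 1) * G z)
      volume 0 1 :=
    ((hexpc.continuousOn.mul hFc).add (hexpc.continuousOn.mul hGc)).intervalIntegrable_of_Icc
      zero_le_one
  have hFTC : (∫ z in (0:ℝ)..1, (Real.exp (z - 1) * F z + Real.exp (z - 1) * G z)) = f x := by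
    rw [intervalIntegral.integral_eq_sub_of_hasDeriv_right_of_le zero_le_one
      (hexpc.continuousOn.mul hFc)
      (fun z hz => ((hΦd z hz).hasDerivWithinAt)) hIntFG]
    have h1 : F 1 = f x := by rw [hF]; simp
    have h0 : F 0 = 0 := by rw [hF]; simp [hzero]
    simp only [Pi.mul_apply]
    rw [h1, h0]
    norm_num
  -- ∫ exp(z-1) = 1 - exp (-1)
  have hEXP : (∫ z in (0:ℝ)..1, Real.exp (z - 1)) = 1 - Real.exp (-1) := by
    rw [intervalIntegral.integral_eq_sub_of_hasDerivAt (f := fun z : ℝ => Real.exp (z - 1))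
      (fun z _ => by simpa [Function.comp_def] using (Real.hasDerivAt_exp (z - 1)).comp z ((hasDerivAt_id z).sub_const 1))
      (hexpc.intervalIntegrable 0 1)]
    norm_num
  -- pointwise inequality
  have hpt : ∀ z ∈ Set.Icc (0:ℝ) 1,
      Real.exp (z - 1) * (f y - F z - G z)
        ≤ Real.exp (z - 1) * (inner ℝ (f' (z • x)) (y - x) : ℝ) := by
    intro z hz
    refine mul_le_mul_of_nonneg_left ?_ (Real.exp_pos _).le
    have hk := key_inner hgrad hsub hmono (hzx z hz) hyX
    have : (inner ℝ (f' (z • x)) (y - x) : ℝ)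
        = (inner ℝ (f' (z • x)) y : ℝ) - (inner ℝ (f' (z • x)) x : ℝ) := inner_sub_right _ _ _
    rw [this]
    rw [hF, hG]
    simp only []
    linarith [hk]
  -- integrability of the two sides
  have hIntL : IntervalIntegrable (fun z => Real.exp (z - 1) * (f y - F z - G z)) volume 0 1 :=
    (hexpc.continuousOn.mul ((continuousOn_const.sub hFc).sub hGc)).intervalIntegrable_of_Icc
      zero_le_one
  have hIntR : IntervalIntegrable
      (fun z => Real.exp (z - 1) * (inner ℝ (f' (z • x)) (y - x) : ℝ)) volume 0 1 :=
    (hexpc.continuousOn.mul (hf'c.inner continuousOn_const)).intervalIntegrable_of_Icc zero_le_one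
  have hmono_int := intervalIntegral.integral_mono_on zero_le_one hIntL hIntR hpt
  -- compute the left integral
  have hLHS : (∫ z in (0:ℝ)..1, Real.exp (z - 1) * (f y - F z - G z))
      = f y * (1 - Real.exp (-1)) - f x := by
    have hsplit : ∀ z : ℝ, Real.exp (z - 1) * (f y - F z - G z)
        = f y * Real.exp (z - 1) - (Real.exp (z - 1) * F z + Real.exp (z - 1) * G z) := by
      intro z; ring
    rw [intervalIntegral.integral_congr (fun z _ => hsplit z)]
    rw [intervalIntegral.integral_sub ((hexpc.intervalIntegrable 0 1).const_mul _) hIntFG]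
    rw [intervalIntegral.integral_const_mul, hEXP, hFTC]
  rw [hgx]
  rw [hLHS] at hmono_int
  have hfinal : (1 - 1 / Real.exp 1) * f y - f x = f y * (1 - Real.exp (-1)) - f x := by
    rw [Real.exp_neg, one_div]
    ring
  rw [hfinal]
  exact hmono_int
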